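/- arXiv:2604.17057 — 2 statements merged into one kernel-verified Lean document; each statement's English description precedes it below -/
import Mathlib

section
/- The collections of coalitions generated by the distinct ≈-equivalence classes of increment arrays of size s partition the set of all size-s subsets of {1, …, n}: every subset C ⊆ {1, …, n} with |C| = s lies in ⋃_{i=1}^{n} {C(i, t)} for exactly one equivalence class [t] of size-s increment arrays. -/
namespace NDCA

/-- `t` is an increment array (IA) of size `s` for `n` agents:
a tuple of non-negative integers of length `s` with sum `n - s`. -/
def IsIA (n s : ℕ) (t : List ℕ) : Prop :=
  t.length = s ∧ t.sum = n - s

/-- Cumulative increment `φ_i` (1-indexed): `φ_1 = 0`, and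
`φ_i = Σ_{k=0}^{i-2} (t_k + 1)` for `2 ≤ i`. -/
def phi (t : List ℕ) (i : ℕ) : ℕ := (t.take (i - 1)).sum + (i - 1)

/-- The coalition generated by increment array `t` from starting agent `x`:
`C(x,t) = { ((x - 1 + φ_i) mod n) + 1 : 1 ≤ i ≤ s }`. -/
def coal (n x : ℕ) (t : List ℕ) : Finset ℕ :=
  (Finset.Icc 1 t.length).image (fun i => (x - 1 + phi t i) % n + 1)

/-- The collection of coalitions generated by `t` as the starting agent
ranges over `{1, …, n}`. -/
def gen (n : ℕ) (t : List ℕ) : Finset (Finset ℕ) :=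
  (Finset.Icc 1 n).image (fun x => coal n x t)

/-- `u` is a circular shift of `t`: `u = ⟨t_k, …, t_{s-1}, t_0, …, t_{k-1}⟩`
for some `0 ≤ k ≤ s - 1`. -/
def ShiftEquiv (t u : List ℕ) : Prop :=
  ∃ k, k < t.length ∧ u = t.rotate k

/-- `p` is a period of `t`: `1 ≤ p`, `p ∣ |t|`, and `t` consists of
`|t|/p` identical copies of its first `p` entries. -/
def IsPeriodOf (t : List ℕ) (p : ℕ) : Prop :=
  1 ≤ p ∧ p ∣ t.length ∧ t = (List.replicate (t.length / p) (t.take p)).flatten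

/-- The period `π(t)`: the smallest `p` that is a period of `t`. -/
noncomputable def period (t : List ℕ) : ℕ := sInf {p | IsPeriodOf t p}

lemma phi_one (t : List ℕ) : phi t 1 = 0 := by simp [phi]

lemma phi_succ (t : List ℕ) {i : ℕ} (h : i < t.length) :
    phi t (i + 1 + 1) = phi t (i + 1) + t.getD i 0 + 1 := by
  simp only [phi]
  rw [show i + 1 + 1 - 1 = i + 1 by omega, show i + 1 - 1 = i by omega,
    List.sum_take_succ _ _ h, List.getD_eq_getElem _ _ h]
  omega

lemma phi_mono (t : List ℕ) {i j : ℕ} (h : i ≤ j) : phi t i ≤ phi t j := by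
  have h1 : (t.take (i - 1)).Sublist (t.take (j - 1)) := by
    have h2 := List.take_sublist (i - 1) (t.take (j - 1))
    rwa [List.take_take, min_eq_left (by omega)] at h2
  have h2 := List.Sublist.sum_le_sum h1 (fun a _ => Nat.zero_le a)
  simp only [phi]; omega

lemma phi_top {n s : ℕ} {t : List ℕ} (ht : IsIA n s t) (hsn : s ≤ n) :
    phi t (s + 1) = n := by
  obtain ⟨hl, hsum⟩ := ht
  simp only [phi, Nat.add_sub_cancel]
  have h1 : t.take s = t := by rw [← hl]; exact List.take_length
  rw [h1]; omega

lemma phi_add_lt {n s : ℕ} {t : List ℕ} (ht : IsIA n s t) (hsn : s ≤ n) {i : ℕ} (hi : i < s) :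
    phi t (i + 1) + t.getD i 0 + 1 ≤ n := by
  rw [← phi_succ t (by rw [ht.1]; exact hi)]
  calc phi t (i + 1 + 1) ≤ phi t (s + 1) := phi_mono t (by omega)
  _ = n := phi_top ht hsn

lemma mem_coal {n x c : ℕ} {t : List ℕ} :
    c ∈ coal n x t ↔ ∃ i, i < t.length ∧ c = (x - 1 + phi t (i + 1)) % n + 1 := by
  simp only [coal, Finset.mem_image, Finset.mem_Icc]
  constructor
  · rintro ⟨i, ⟨h1, h2⟩, rfl⟩
    exact ⟨i - 1, by omega, by rw [show i - 1 + 1 = i by omega]⟩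
  · rintro ⟨i, h, rfl⟩
    exact ⟨i + 1, ⟨by omega, by omega⟩, rfl⟩

lemma mem_r {n x : ℕ} {t : List ℕ} {i : ℕ} (hil : i < t.length) :
    (x - 1 + phi t (i + 1)) % n + 1 ∈ coal n x t :=
  mem_coal.2 ⟨i, hil, rfl⟩

lemma mod_inj {n a v w : ℕ} (hv : v < n) (hw : w < n)
    (h : (a + v) % n = (a + w) % n) : v = w := by
  have h2 : v ≡ w [MOD n] := Nat.ModEq.add_left_cancel' a h
  have h3 : v % n = w % n := h2
  rw [Nat.mod_eq_of_lt hv, Nat.mod_eq_of_lt hw] at h3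
  exact h3

lemma r_step {n s : ℕ} {t : List ℕ} (ht : IsIA n s t) (hs1 : 1 ≤ s) (hsn : s ≤ n)
    {x i : ℕ} (hi : i < s) :
    ((x - 1 + phi t (i + 1)) % n + (t.getD i 0 + 1)) % n
      = (x - 1 + phi t ((i + 1) % s + 1)) % n := by
  rw [Nat.mod_add_mod]
  have hil : i < t.length := by rw [ht.1]; exact hi
  have hps := phi_succ t hil
  rcases Nat.lt_or_ge (i + 1) s with h | h
  · rw [Nat.mod_eq_of_lt h]
    congr 1; omega
  · have hieq : i + 1 = s := by omega
    have hmod : (i + 1) % s = 0 := by rw [hieq]; exact Nat.mod_self s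
    have htop : phi t (i + 1 + 1) = n := by rw [hieq]; exact phi_top ht hsn
    rw [hmod, Nat.zero_add, phi_one, add_zero]
    have h1 : x - 1 + phi t (i + 1) + (t.getD i 0 + 1) = x - 1 + n := by omega
    rw [h1, Nat.add_mod_right]

lemma gap_min {n s : ℕ} {t : List ℕ} (ht : IsIA n s t) (hsn : s ≤ n)
    {x i d : ℕ} (hi : i < s) (hd1 : 1 ≤ d) (hd2 : d ≤ t.getD i 0) :
    ((x - 1 + phi t (i + 1)) % n + d) % n + 1 ∉ coal n x t := by
  intro hmem
  rw [mem_coal] at hmem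
  obtain ⟨j, hjl, hj⟩ := hmem
  have hj' : j < s := by rw [← ht.1]; exact hjl
  rw [Nat.mod_add_mod, add_assoc] at hj
  have hlt_i : phi t (i + 1) + d < n := by
    have := phi_add_lt ht hsn hi; omega
  have hlt_j : phi t (j + 1) < n := by
    have := phi_add_lt ht hsn hj'; omega
  have heq : phi t (i + 1) + d = phi t (j + 1) :=
    mod_inj (a := x - 1) hlt_i hlt_j (by omega)
  rcases Nat.lt_or_ge i j with h | h
  · have h1 : phi t (i + 1 + 1) ≤ phi t (j + 1) := phi_mono t (by omega)
    have h2 := phi_succ t (show i < t.length by rw [ht.1]; exact hi)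
    omega
  · have h1 : phi t (j + 1) ≤ phi t (i + 1) := phi_mono t (by omega)
    omega

lemma gap_det {n s : ℕ} {t u : List ℕ} (ht : IsIA n s t) (hu : IsIA n s u)
    (hs1 : 1 ≤ s) (hsn : s ≤ n) {x y : ℕ}
    (hC : coal n x t = coal n y u) {m p : ℕ} (hm : m < s) (hp : p < s)
    (heq : (y - 1 + phi u (m + 1)) % n = (x - 1 + phi t (p + 1)) % n) :
    u.getD m 0 = t.getD p 0 := by
  by_contra hne
  rcases Nat.lt_or_ge (u.getD m 0) (t.getD p 0) with h | h
  · have hmem : ((y - 1 + phi u (m + 1)) % n + (u.getD m 0 + 1)) % n + 1 ∈ coal n y u := by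
      rw [r_step hu hs1 hsn hm]
      exact mem_r (by rw [hu.1]; exact Nat.mod_lt _ (by omega))
    have hnot : ((x - 1 + phi t (p + 1)) % n + (u.getD m 0 + 1)) % n + 1 ∉ coal n x t :=
      gap_min ht hsn hp (by omega) (by omega)
    rw [heq, ← hC] at hmem
    exact hnot hmem
  · have hmem : ((x - 1 + phi t (p + 1)) % n + (t.getD p 0 + 1)) % n + 1 ∈ coal n x t := by
      rw [r_step ht hs1 hsn hp]
      exact mem_r (by rw [ht.1]; exact Nat.mod_lt _ (by omega))
    have hnot : ((y - 1 + phi u (m + 1)) % n + (t.getD p 0 + 1)) % n + 1 ∉ coal n y u :=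
      gap_min hu hsn hm (by omega) (by omega)
    rw [← heq, hC] at hmem
    exact hnot hmem

lemma unique_rot {n s : ℕ} {t u : List ℕ} (ht : IsIA n s t) (hu : IsIA n s u)
    (hs1 : 1 ≤ s) (hsn : s ≤ n) {x y : ℕ} (hy1 : 1 ≤ y) (hyn : y ≤ n)
    (hC : coal n x t = coal n y u) : ShiftEquiv t u := by
  have hn : 1 ≤ n := le_trans hs1 hsn
  have hy : y ∈ coal n y u := by
    have h0 := mem_r (x := y) (n := n) (t := u) (i := 0) (by rw [hu.1]; omega)
    have h1 : (y - 1 + phi u (0 + 1)) % n + 1 = y := by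
      rw [phi_one, add_zero, Nat.mod_eq_of_lt (by omega)]; omega
    rwa [h1] at h0
  rw [← hC] at hy
  obtain ⟨j, hjl, hjy⟩ := mem_coal.1 hy
  have hj' : j < s := by rw [← ht.1]; exact hjl
  have claim : ∀ m, m < s → (y - 1 + phi u (m + 1)) % n
      = (x - 1 + phi t ((j + m) % s + 1)) % n := by
    intro m
    induction m with
    | zero =>
      intro _
      have hjs : (j + 0) % s = j := by rw [Nat.add_zero]; exact Nat.mod_eq_of_lt hj'
      rw [hjs, phi_one, add_zero, Nat.mod_eq_of_lt (show y - 1 < n by omega)]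
      omega
    | succ m ih =>
      intro hm1
      have hm : m < s := by omega
      have ihm := ih hm
      have hgap := gap_det ht hu hs1 hsn hC hm (Nat.mod_lt _ (by omega)) ihm
      have h1 : phi u (m + 1 + 1) = phi u (m + 1) + u.getD m 0 + 1 :=
        phi_succ u (by rw [hu.1]; exact hm)
      have h2 : (y - 1 + phi u (m + 1 + 1)) % n
          = ((y - 1 + phi u (m + 1)) % n + (u.getD m 0 + 1)) % n := by
        rw [Nat.mod_add_mod]; congr 1; omega
      rw [h2, ihm, hgap, r_step ht hs1 hsn (Nat.mod_lt _ (by omega))]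
      have h3 : ((j + m) % s + 1) % s = (j + (m + 1)) % s := by
        rw [Nat.mod_add_mod, Nat.add_assoc]
      rw [h3]
  refine ⟨j, hjl, ?_⟩
  apply List.ext_getElem
  · rw [List.length_rotate, ht.1, hu.1]
  · intro m h1 h2
    rw [List.getElem_rotate]
    have hm : m < s := by rw [← hu.1]; exact h1
    have hgap := gap_det ht hu hs1 hsn hC hm (Nat.mod_lt _ (by omega)) (claim m hm)
    have hidx : (m + j) % t.length = (j + m) % s := by rw [ht.1, Nat.add_comm]
    have hgap' : u.getD m 0 = t.getD ((m + j) % t.length) 0 := by rw [hidx]; exact hgap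
    have hpos : 0 < t.length := by rw [ht.1]; omega
    rw [← List.getD_eq_getElem u 0 h1, ← List.getD_eq_getElem t 0 (Nat.mod_lt _ hpos)]
    exact hgap'

lemma exists_gen {n s : ℕ} (hn : 1 ≤ n) (hs1 : 1 ≤ s) (hsn : s ≤ n)
    (C : Finset ℕ) (hsub : C ⊆ Finset.Icc 1 n) (hcard : C.card = s) :
    ∃ t, IsIA n s t ∧ C ∈ gen n t := by
  classical
  set l := C.sort (· ≤ ·) with hldef
  have hlen : l.length = s := by rw [hldef, Finset.length_sort, hcard]
  have hmeml : ∀ a, a ∈ l ↔ a ∈ C := fun a => Finset.mem_sort _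
  have hsorted : l.Pairwise (· < ·) := (Finset.sortedLT_sort C).pairwise
  have hlt : ∀ i j, i < j → j < s → l.getD i 0 < l.getD j 0 := by
    intro i j hij hj
    rw [List.getD_eq_getElem l 0 (by omega), List.getD_eq_getElem l 0 (by omega)]
    exact List.pairwise_iff_getElem.1 hsorted i j (by omega) (by omega) hij
  have hbound : ∀ i, i < s → 1 ≤ l.getD i 0 ∧ l.getD i 0 ≤ n := by
    intro i hi
    rw [List.getD_eq_getElem l 0 (by omega)]
    have h1 : l[i]'(by omega) ∈ C := (hmeml _).1 (List.getElem_mem _)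
    have h2 := hsub h1
    simpa [Finset.mem_Icc] using h2
  set t := (List.range s).map (fun i => if i + 1 < s then l.getD (i + 1) 0 - l.getD i 0 - 1
      else n + l.getD 0 0 - l.getD (s - 1) 0 - 1) with htdef
  have htlen : t.length = s := by simp [htdef]
  have htget : ∀ i, i < s → t.getD i 0 = if i + 1 < s then l.getD (i + 1) 0 - l.getD i 0 - 1
      else n + l.getD 0 0 - l.getD (s - 1) 0 - 1 := by
    intro i hi
    rw [htdef, List.getD_eq_getElem _ 0 (by simpa using hi)]
    simp
  have hphi : ∀ i, i < s → phi t (i + 1) + l.getD 0 0 = l.getD i 0 := by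
    intro i
    induction i with
    | zero => intro _; rw [phi_one, Nat.zero_add]
    | succ i ih =>
      intro h
      have hi : i < s := by omega
      have h1 : phi t (i + 1 + 1) = phi t (i + 1) + t.getD i 0 + 1 :=
        phi_succ t (by omega)
      have h2 : t.getD i 0 = l.getD (i + 1) 0 - l.getD i 0 - 1 := by
        rw [htget i hi, if_pos (by omega)]
      have h3 := hlt i (i + 1) (by omega) h
      have h4 := ih hi
      omega
  have hle : l.getD 0 0 ≤ l.getD (s - 1) 0 := by
    rcases Nat.lt_or_ge 0 (s - 1) with h | h
    · exact le_of_lt (hlt 0 (s - 1) h (by omega))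
    · have h0 : s - 1 = 0 := by omega
      rw [h0]
  have hsum : t.sum = n - s := by
    have hs1' : s - 1 < t.length := by omega
    have h1 : (t.take (s - 1 + 1)).sum = (t.take (s - 1)).sum + t.getD (s - 1) 0 := by
      rw [List.sum_take_succ _ _ hs1', List.getD_eq_getElem _ _ hs1']
    have h2 : t.take (s - 1 + 1) = t := by
      rw [show s - 1 + 1 = s by omega, ← htlen, List.take_length]
    have h3 := hphi (s - 1) (by omega)
    have h4 : phi t (s - 1 + 1) = (t.take (s - 1)).sum + (s - 1) := by
      simp only [phi, Nat.add_sub_cancel]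
    have h5 : t.getD (s - 1) 0 = n + l.getD 0 0 - l.getD (s - 1) 0 - 1 := by
      rw [htget _ (by omega), if_neg (by omega)]
    have hb0 := hbound 0 (by omega)
    have hbs := hbound (s - 1) (by omega)
    rw [← h2]
    omega
  have hcoal : coal n (l.getD 0 0) t = C := by
    ext c
    rw [mem_coal]
    constructor
    · rintro ⟨i, hil, rfl⟩
      have hi : i < s := by omega
      have h1 := hphi i hi
      have hb := hbound i hi
      have hb0 := hbound 0 (by omega)
      have h2 : l.getD 0 0 - 1 + phi t (i + 1) = l.getD i 0 - 1 := by omega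
      rw [h2, Nat.mod_eq_of_lt (by omega), show l.getD i 0 - 1 + 1 = l.getD i 0 by omega,
        ← hmeml, List.getD_eq_getElem l 0 (by omega)]
      exact List.getElem_mem _
    · intro hc
      obtain ⟨i, hil, hci⟩ := List.mem_iff_getElem.1 ((hmeml c).2 hc)
      have hi : i < s := by omega
      refine ⟨i, by omega, ?_⟩
      have h1 := hphi i hi
      have hb := hbound i hi
      have hb0 := hbound 0 (by omega)
      have hgd : l.getD i 0 = c := by rw [List.getD_eq_getElem l 0 hil]; exact hci
      have h2 : l.getD 0 0 - 1 + phi t (i + 1) = c - 1 := by omega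
      rw [h2, Nat.mod_eq_of_lt (by omega)]
      omega
  refine ⟨t, ⟨htlen, hsum⟩, ?_⟩
  have hb0 := hbound 0 (by omega)
  simp only [gen, Finset.mem_image]
  exact ⟨l.getD 0 0, Finset.mem_Icc.2 ⟨hb0.1, hb0.2⟩, hcoal⟩

/-- Every `C ⊆ {1,…,n}` with `|C| = s` lies in the
collection of coalitions generated by exactly one `≈`-equivalence class of
size-`s` increment arrays: some increment array generates it, and any two
increment arrays generating it are circular shifts of one another. -/
theorem stmt11 (n s : ℕ) (hn : 1 ≤ n) (hs1 : 1 ≤ s) (hsn : s ≤ n)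
    (C : Finset ℕ) (hsub : C ⊆ Finset.Icc 1 n) (hcard : C.card = s) :
    (∃ t, IsIA n s t ∧ C ∈ gen n t) ∧
    (∀ t u, IsIA n s t → IsIA n s u →
      C ∈ gen n t → C ∈ gen n u → ShiftEquiv t u) := by
  constructor
  · exact exists_gen hn hs1 hsn C hsub hcard
  · intro t u hIAt hIAu hgt hgu
    simp only [gen, Finset.mem_image, Finset.mem_Icc] at hgt hgu
    obtain ⟨x, hx, hxc⟩ := hgt
    obtain ⟨y, hy, hyc⟩ := hgu
    exact unique_rot hIAt hIAu hs1 hsn hy.1 hy.2 (hxc.trans hyc.symm)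

end NDCA
end

section
/- The binomial coefficient C(n, s) decomposes over the ≈-equivalence classes of increment arrays of size s as the sum of their strides: C(n, s) = Σ_{[t]} n·π(t)/s, where the sum ranges over one representative t of each equivalence class. Equivalently, C(n, s) = n·|A(n, s)| + Σ_{t ∈ P(n, s)} ϖ(t), where A(n, s) is the set of aperiodic canonical representatives (π(t) = s), P(n, s) the set of periodic ones (π(t) < s), and ϖ(t) = n·π(t)/s. -/
namespace NDCA

/-! ### Counting lists with given length and sum -/

def LB : ℕ → ℕ → Finset (List ℕ)
  | 0, m => if m = 0 then {[]} else ∅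
  | s+1, m => (Finset.range (m+1)).biUnion fun a => (LB s (m-a)).image (a :: ·)

lemma mem_LB : ∀ s m (t : List ℕ), t ∈ LB s m ↔ t.length = s ∧ t.sum = m := by
  intro s
  induction s with
  | zero =>
    intro m t
    rcases Nat.eq_zero_or_pos m with rfl | hm
    · constructor
      · intro h
        simp [LB] at h
        subst h; simp
      · rintro ⟨h, _⟩
        rw [List.length_eq_zero_iff] at h
        subst h; simp [LB]
    · have hm' : ¬ m = 0 := by omega
      constructor
      · intro h; simp [LB, hm'] at h
      · rintro ⟨hl, hsum⟩
        rw [List.length_eq_zero_iff] at hl; subst hl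
        simp at hsum; omega
  | succ s ih =>
    intro m t
    simp only [LB, Finset.mem_biUnion, Finset.mem_range, Finset.mem_image]
    constructor
    · rintro ⟨a, ha, u, hu, rfl⟩
      obtain ⟨h1, h2⟩ := (ih _ u).mp hu
      simp [h1, h2]; omega
    · intro ⟨h1, h2⟩
      match t with
      | a :: u =>
        simp only [List.length_cons, Nat.succ_inj] at h1
        simp only [List.sum_cons] at h2
        exact ⟨a, by omega, u, (ih _ u).mpr ⟨h1, by omega⟩, rfl⟩

lemma sum_choose_aux (s : ℕ) : ∀ m, ∑ b ∈ Finset.range (m+1), (b + s - 1).choose b = (m + s).choose m := by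
  intro m
  induction m with
  | zero => simp
  | succ m ih =>
    rw [Finset.sum_range_succ, ih, show m + 1 + s - 1 = m + s by omega,
      show m + 1 + s = (m + s) + 1 by omega]
    rw [Nat.choose_succ_succ (m+s) m]

lemma card_LB : ∀ s m, (LB s m).card = (m + s - 1).choose m := by
  intro s
  induction s with
  | zero =>
    intro m
    rcases Nat.eq_zero_or_pos m with rfl | hm
    · simp [LB]
    · have hm' : ¬ m = 0 := by omega
      simp only [LB, if_neg hm', Finset.card_empty]
      symm
      apply Nat.choose_eq_zero_of_lt
      omega
  | succ s ih =>
    intro m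
    rw [LB, Finset.card_biUnion]
    · have : ∀ a ∈ Finset.range (m+1), ((LB s (m-a)).image (a :: ·)).card
          = ((m - a) + s - 1).choose (m - a) := by
        intro a _
        rw [Finset.card_image_of_injective _ (fun x y h => by injection h), ih]
      rw [Finset.sum_congr rfl this]
      have := Finset.sum_range_reflect (fun b => (b + s - 1).choose b) (m+1)
      have h2 : ∀ j ∈ Finset.range (m+1), (fun b => (b + s - 1).choose b) (m + 1 - 1 - j)
          = ((m - j) + s - 1).choose (m - j) := by intro j _; simp
      rw [Finset.sum_congr rfl h2] at this
      rw [this, sum_choose_aux, show m + (s+1) - 1 = m + s by omega]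
    · intro a _ b _ hab
      simp only [Finset.disjoint_left, Finset.mem_image]
      rintro t ⟨u, _, rfl⟩ ⟨v, _, hv⟩
      injection hv with h1 _
      exact hab h1.symm

/-! ### Periods and rotations -/

lemma flatten_replicate_comm (c : List ℕ) (k : ℕ) :
    (List.replicate k c).flatten ++ c = c ++ (List.replicate k c).flatten := by
  induction k with
  | zero => simp
  | succ k ih => simp only [List.replicate_succ, List.flatten_cons, List.append_assoc, ih]

lemma rotate_of_isPeriodOf {t : List ℕ} {p : ℕ} (h : IsPeriodOf t p) : t.rotate p = t := by
  obtain ⟨hp1, hpd, ht⟩ := h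
  by_cases ht0 : t = []
  · subst ht0; simp
  have hs1 : 1 ≤ t.length := List.length_pos_iff.2 ht0
  have hps : p ≤ t.length := Nat.le_of_dvd hs1 hpd
  set q := t.length / p with hq
  have hq1 : 1 ≤ q := (Nat.one_le_div_iff (by omega)).2 hps
  have hcl : (t.take p).length = p := by rw [List.length_take]; omega
  have hrep : t = t.take p ++ (List.replicate (q-1) (t.take p)).flatten := by
    conv_lhs => rw [ht]
    rw [show q = 1 + (q-1) by omega, List.replicate_add, List.flatten_append]
    simp
  have hdrop : t.drop p = (List.replicate (q-1) (t.take p)).flatten := by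
    conv_lhs => rw [hrep]
    exact List.drop_left' hcl
  rw [List.rotate_eq_drop_append_take hps, hdrop, flatten_replicate_comm]
  exact hrep.symm

lemma isPeriodOf_of_rotate' : ∀ (q p : ℕ) (t : List ℕ), t.length = p * q →
    t.rotate p = t → t = (List.replicate q (t.take p)).flatten := by
  intro q
  induction q with
  | zero =>
    intro p t hlen _
    have : t = [] := List.length_eq_zero_iff.mp (by omega)
    simp [this]
  | succ q ih =>
    intro p t hlen hrot
    by_cases hp0 : p = 0
    · subst hp0
      have : t = [] := List.length_eq_zero_iff.mp (by omega)
      simp [this]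
    have hlen' : t.length = p * q + p := by rw [hlen]; ring
    have hps : p ≤ t.length := by omega
    have hcl : (t.take p).length = p := by rw [List.length_take]; omega
    have hll : (t.drop p).length = p * q := by rw [List.length_drop]; omega
    have htcl : t.take p ++ t.drop p = t := List.take_append_drop p t
    have hcomm : t.drop p ++ t.take p = t.take p ++ t.drop p := by
      have h1 : t.rotate p = t.drop p ++ t.take p := List.rotate_eq_drop_append_take hps
      rw [hrot] at h1
      rw [← h1, htcl]
    by_cases hq0 : q = 0
    · subst hq0
      have : t.drop p = [] := List.length_eq_zero_iff.mp (by simpa using hll)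
      rw [← htcl, this]
      simp
    have hpl' : p ≤ (t.drop p).length := by
      rw [hll]; calc p = p * 1 := (mul_one p).symm
        _ ≤ p * q := Nat.mul_le_mul_left p (by omega)
    have htake : (t.drop p).take p = t.take p := by
      have h2 : (t.drop p ++ t.take p).take p = (t.drop p).take p :=
        List.take_append_of_le_length hpl'
      have h3 : (t.take p ++ t.drop p).take p = t.take p := List.take_left' hcl
      rw [hcomm, h3] at h2
      exact h2.symm
    have hdropp : (t.drop p).drop p ++ t.take p = t.drop p := by
      have h2 : (t.drop p ++ t.take p).drop p = (t.drop p).drop p ++ t.take p :=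
        List.drop_append_of_le_length hpl'
      have h3 : (t.take p ++ t.drop p).drop p = t.drop p := List.drop_left' hcl
      rw [hcomm, h3] at h2
      exact h2.symm
    have hrotl : (t.drop p).rotate p = t.drop p := by
      rw [List.rotate_eq_drop_append_take hpl', htake, hdropp]
    have hihres := ih p (t.drop p) hll hrotl
    rw [htake] at hihres
    calc t = t.take p ++ t.drop p := htcl.symm
      _ = t.take p ++ (List.replicate q (t.take p)).flatten := by rw [← hihres]
      _ = (List.replicate (q+1) (t.take p)).flatten := by
          rw [List.replicate_succ, List.flatten_cons]

lemma isPeriodOf_of_rotate {t : List ℕ} {p : ℕ} (hp : 1 ≤ p) (hd : p ∣ t.length)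
    (hr : t.rotate p = t) : IsPeriodOf t p :=
  ⟨hp, hd, isPeriodOf_of_rotate' (t.length / p) p t (Nat.mul_div_cancel' hd).symm hr⟩

lemma isPeriodOf_length {t : List ℕ} (h : t ≠ []) : IsPeriodOf t t.length := by
  refine ⟨List.length_pos_iff.2 h, dvd_refl _, ?_⟩
  rw [Nat.div_self (List.length_pos_iff.2 h)]
  simp

lemma period_isPeriodOf {t : List ℕ} (h : t ≠ []) : IsPeriodOf t (period t) :=
  Nat.sInf_mem (s := {p | IsPeriodOf t p}) ⟨_, isPeriodOf_length h⟩

lemma period_pos {t : List ℕ} (h : t ≠ []) : 1 ≤ period t := (period_isPeriodOf h).1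

lemma period_dvd_length {t : List ℕ} (h : t ≠ []) : period t ∣ t.length :=
  (period_isPeriodOf h).2.1

lemma rotate_period {t : List ℕ} (h : t ≠ []) : t.rotate (period t) = t :=
  rotate_of_isPeriodOf (period_isPeriodOf h)

lemma rotate_mul_self {t : List ℕ} {p : ℕ} (h : t.rotate p = t) (m : ℕ) :
    t.rotate (p * m) = t := by
  induction m with
  | zero => simp
  | succ m ih =>
    rw [show p * (m+1) = p * m + p by ring, ← List.rotate_rotate, ih, h]

lemma rotate_of_period_dvd {t : List ℕ} (hne : t ≠ []) {k : ℕ} (h : period t ∣ k) :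
    t.rotate k = t := by
  obtain ⟨m, rfl⟩ := h
  exact rotate_mul_self (rotate_period hne) m

lemma rotate_cancel {t : List ℕ} {a m : ℕ} (h : t.rotate (a + m) = t.rotate a) :
    t.rotate m = t := by
  by_cases ht0 : t = []
  · subst ht0; simp
  have hs1 : 1 ≤ t.length := List.length_pos_iff.2 ht0
  set s := t.length with hs
  set k := s * (a / s + 1) - a with hk
  have hmod : a % s < s := Nat.mod_lt _ (by omega)
  have hdm : s * (a / s) + a % s = a := Nat.div_add_mod a s
  have hexp : s * (a / s + 1) = s * (a / s) + s := by ring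
  have hak : a + k = s * (a / s + 1) := by omega
  have h1 : (t.rotate (a + m)).rotate k = (t.rotate a).rotate k := by rw [h]
  rw [List.rotate_rotate, List.rotate_rotate] at h1
  rw [show a + m + k = (a + k) + m by ring, hak] at h1
  rw [← List.rotate_rotate, List.rotate_length_mul] at h1
  exact h1

lemma rotate_gcd {t : List ℕ} (a b : ℕ) (ha : t.rotate a = t) (hb : t.rotate b = t) :
    t.rotate (Nat.gcd a b) = t := by
  induction a, b using Nat.gcd.induction with
  | H0 n => simpa using hb
  | H1 m n hm ih =>
    rw [Nat.gcd_rec]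
    apply ih _ ha
    have h1 : t.rotate (m * (n / m) + n % m) = t := by
      rw [show m * (n / m) + n % m = n from Nat.div_add_mod n m]
      exact hb
    rw [← List.rotate_rotate, rotate_mul_self ha] at h1
    exact h1

lemma period_dvd_of_rotate {t : List ℕ} (hne : t ≠ []) {k : ℕ} (h : t.rotate k = t) :
    period t ∣ k := by
  have hs1 : 1 ≤ t.length := List.length_pos_iff.2 hne
  have hrs : t.rotate t.length = t := List.rotate_length t
  have hd : t.rotate (Nat.gcd k t.length) = t := rotate_gcd k t.length h hrs
  have hds : Nat.gcd k t.length ∣ t.length := Nat.gcd_dvd_right _ _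
  have hdk : Nat.gcd k t.length ∣ k := Nat.gcd_dvd_left _ _
  have hrotp : t.rotate (period t) = t := rotate_period hne
  set e := Nat.gcd (period t) (Nat.gcd k t.length) with he'
  have he : t.rotate e = t := rotate_gcd _ _ hrotp hd
  have hep : e ∣ period t := Nat.gcd_dvd_left _ _
  have hed : e ∣ Nat.gcd k t.length := Nat.gcd_dvd_right _ _
  have hppos : 1 ≤ period t := period_pos hne
  have he1 : 1 ≤ e := by
    rcases Nat.eq_zero_or_pos e with h0 | h1
    · have := Nat.eq_zero_of_gcd_eq_zero_left h0
      omega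
    · omega
  have heper : IsPeriodOf t e := isPeriodOf_of_rotate he1 (hed.trans hds) he
  have h1 : period t ≤ e := Nat.sInf_le heper
  have h2 : e ≤ period t := Nat.le_of_dvd hppos hep
  have : period t = e := le_antisymm h1 h2
  rw [this]
  exact hed.trans hdk

/-! ### Orbits -/

def orbit (t : List ℕ) : Finset (List ℕ) :=
  (Finset.range t.length).image (fun k => t.rotate k)

lemma mem_orbit {t u : List ℕ} : u ∈ orbit t ↔ ∃ k < t.length, t.rotate k = u := by
  simp [orbit]

lemma orbit_card {t : List ℕ} (hne : t ≠ []) : (orbit t).card = period t := by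
  have hs1 : 1 ≤ t.length := List.length_pos_iff.2 hne
  have hple : period t ≤ t.length := Nat.le_of_dvd hs1 (period_dvd_length hne)
  have hppos : 1 ≤ period t := period_pos hne
  have him : orbit t = (Finset.range (period t)).image (fun k => t.rotate k) := by
    apply Finset.Subset.antisymm
    · intro u hu
      rw [mem_orbit] at hu
      obtain ⟨k, hk, rfl⟩ := hu
      simp only [Finset.mem_image, Finset.mem_range]
      refine ⟨k % period t, Nat.mod_lt _ (by omega), ?_⟩
      conv_rhs => rw [show k = period t * (k / period t) + k % period t from
        (Nat.div_add_mod k (period t)).symm]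
      rw [← List.rotate_rotate, rotate_of_period_dvd hne ⟨_, rfl⟩]
    · rw [orbit]
      exact Finset.image_subset_image (Finset.range_subset_range.mpr hple)
  rw [him, Finset.card_image_of_injOn, Finset.card_range]
  intro i hi j hj hij
  have hij' : t.rotate i = t.rotate j := hij
  simp only [Finset.coe_range, Set.mem_Iio] at hi hj
  rcases le_total i j with hle | hle
  · have hr : t.rotate (i + (j - i)) = t.rotate i := by
      rw [show i + (j-i) = j by omega]; exact hij'.symm
    have h2 : t.rotate (j - i) = t := rotate_cancel hr
    have h3 : period t ∣ j - i := period_dvd_of_rotate hne h2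
    rcases Nat.eq_zero_or_pos (j - i) with h0 | hpos
    · omega
    · have := Nat.le_of_dvd hpos h3; omega
  · have hr : t.rotate (j + (i - j)) = t.rotate j := by
      rw [show j + (i-j) = i by omega]; exact hij'
    have h2 : t.rotate (i - j) = t := rotate_cancel hr
    have h3 : period t ∣ i - j := period_dvd_of_rotate hne h2
    rcases Nat.eq_zero_or_pos (i - j) with h0 | hpos
    · omega
    · have := Nat.le_of_dvd hpos h3; omega

lemma isIA_rotate {n s : ℕ} {t : List ℕ} (h : IsIA n s t) (k : ℕ) : IsIA n s (t.rotate k) :=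
  ⟨by simp [h.1], by rw [(List.rotate_perm t k).sum_eq, h.2]⟩


/-- Let `R` contain exactly one representative of each
`≈`-equivalence class of size-`s` increment arrays.  Then the binomial
coefficient decomposes as the sum of strides over the classes:
`C(n,s) = Σ_{t ∈ R} n·π(t)/s`; equivalently
`C(n,s) = n·|A(n,s)| + Σ_{t ∈ P(n,s)} ϖ(t)` where `A(n,s)` are the aperiodic
representatives (`π(t) = s`), `P(n,s)` the periodic ones (`π(t) < s`), and
`ϖ(t) = n·π(t)/s`. -/
theorem stmt12 (n s : ℕ) (hn : 1 ≤ n) (hs1 : 1 ≤ s) (hsn : s ≤ n)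
    (R : Finset (List ℕ))
    (hIA : ∀ t ∈ R, IsIA n s t)
    (hdistinct : ∀ t ∈ R, ∀ u ∈ R, ShiftEquiv t u → t = u)
    (hcomplete : ∀ u, IsIA n s u → ∃ t ∈ R, ShiftEquiv t u) :
    Nat.choose n s = ∑ t ∈ R, n * period t / s ∧
    Nat.choose n s =
      n * (R.filter (fun t => period t = s)).card
        + ∑ t ∈ R.filter (fun t => period t < s), n * period t / s := by
  have hslen : ∀ t ∈ R, t.length = s := fun t ht => (hIA t ht).1
  have hne : ∀ t ∈ R, t ≠ [] := by
    intro t ht h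
    have := hslen t ht
    rw [h] at this
    simp at this; omega
  -- the finset of all IAs is partitioned into orbits
  have hpartition : LB s (n - s) = R.biUnion orbit := by
    ext u
    rw [mem_LB, Finset.mem_biUnion]
    constructor
    · rintro ⟨hl, hsum⟩
      obtain ⟨t, htR, k, hk, rfl⟩ := hcomplete u ⟨hl, hsum⟩
      exact ⟨t, htR, mem_orbit.mpr ⟨k, hk, rfl⟩⟩
    · rintro ⟨t, htR, hu⟩
      obtain ⟨k, hk, rfl⟩ := mem_orbit.mp hu
      have := isIA_rotate (hIA t htR) k
      exact ⟨this.1, this.2⟩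
  have hdisj : ∀ t ∈ R, ∀ t' ∈ R, t ≠ t' → Disjoint (orbit t) (orbit t') := by
    intro t ht t' ht' hne'
    rw [Finset.disjoint_left]
    intro u hu hu'
    obtain ⟨i, hi, rfl⟩ := mem_orbit.mp hu
    obtain ⟨j, hj, hj2⟩ := mem_orbit.mp hu'
    have hrot : t ~r t' := by
      have h1 : t ~r t.rotate i := (List.IsRotated.forall t i).symm
      have h2 : t'.rotate j ~r t' := List.IsRotated.forall t' j
      rw [hj2] at h2
      exact h1.trans h2
    obtain ⟨k, hk, hkt⟩ := List.isRotated_iff_mod.mp hrot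
    rcases lt_or_eq_of_le hk with hlt | heq
    · exact hne' (hdistinct t ht t' ht' ⟨k, hlt, hkt.symm⟩)
    · rw [heq, List.rotate_length] at hkt
      exact hne' hkt
  have hcard : (LB s (n - s)).card = ∑ t ∈ R, period t := by
    rw [hpartition, Finset.card_biUnion hdisj]
    exact Finset.sum_congr rfl fun t ht => orbit_card (hne t ht)
  have hchoose : (LB s (n - s)).card = (n - 1).choose (s - 1) := by
    rw [card_LB, show (n - s) + s - 1 = n - 1 by omega]
    have h1 : (n - 1).choose ((n-1) - (s-1)) = (n - 1).choose (s - 1) :=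
      Nat.choose_symm (by omega)
    rw [show n - s = (n - 1) - (s - 1) by omega, h1]
  have hdvd : ∀ t ∈ R, s ∣ n * period t := by
    intro t ht
    have hper := period_isPeriodOf (hne t ht)
    have hlen := hslen t ht
    have hpd : period t ∣ s := hlen ▸ hper.2.1
    set q := s / period t with hq'
    have hq : period t * q = s := Nat.mul_div_cancel' (hlen ▸ hper.2.1)
    have hqs : q ∣ s := ⟨period t, by rw [← hq]; ring⟩
    have hsumt : t.sum = q * (t.take (period t)).sum := by
      conv_lhs => rw [hper.2.2]
      rw [List.sum_flatten, List.map_replicate, List.sum_replicate, smul_eq_mul, hlen]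
    have hqns : q ∣ n - s := ⟨(t.take (period t)).sum, by rw [← (hIA t ht).2, hsumt]⟩
    have hqn : q ∣ n := by
      have : n = (n - s) + s := by omega
      rw [this]
      exact dvd_add hqns hqs
    obtain ⟨m, hm⟩ := hqn
    exact ⟨m, by rw [hm, ← hq]; ring⟩
  have hppos : ∀ t ∈ R, 1 ≤ period t := fun t ht => period_pos (hne t ht)
  have hple : ∀ t ∈ R, period t ≤ s := by
    intro t ht
    have := (period_isPeriodOf (hne t ht)).2.1
    rw [hslen t ht] at this
    exact Nat.le_of_dvd (by omega) this
  have hmain : Nat.choose n s = ∑ t ∈ R, n * period t / s := by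
    apply Nat.eq_of_mul_eq_mul_left (show 0 < s by omega)
    rw [Finset.mul_sum]
    have h1 : ∀ t ∈ R, s * (n * period t / s) = n * period t := fun t ht =>
      Nat.mul_div_cancel' (hdvd t ht)
    rw [Finset.sum_congr rfl h1]
    have h2 : ∑ t ∈ R, n * period t = n * ∑ t ∈ R, period t := by
      rw [Finset.mul_sum]
    rw [h2, ← hcard, hchoose]
    have h3 := Nat.add_one_mul_choose_eq (n-1) (s-1)
    rw [show n - 1 + 1 = n by omega, show s - 1 + 1 = s by omega] at h3
    rw [h3, Nat.mul_comm]
  refine ⟨hmain, ?_⟩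
  have h5 : R.filter (fun t => ¬ period t = s) = R.filter (fun t => period t < s) := by
    apply Finset.filter_congr
    intro t ht
    have := hple t ht
    constructor <;> (intro; omega)
  have h4 : ∑ t ∈ R.filter (fun t => period t = s), n * period t / s
      = n * (R.filter (fun t => period t = s)).card := by
    have hterm : ∀ t ∈ R.filter (fun t => period t = s), n * period t / s = n := by
      intro t ht
      obtain ⟨htR, hps⟩ := Finset.mem_filter.mp ht
      rw [hps, Nat.mul_div_cancel _ (show 0 < s by omega)]
    rw [Finset.sum_congr rfl hterm, Finset.sum_const, smul_eq_mul, Nat.mul_comm]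
  rw [hmain, ← Finset.sum_filter_add_sum_filter_not R (fun t => period t = s)
    (fun t => n * period t / s), h4, h5]


end NDCA
end
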